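/- There exists a constant C > 0, independent of δ and of the intervals J_1, J_2, such that for every point x ∈ ℝ² × ℝ, ∑_{(μ,ν) ∈ (𝒩_*^{(δ)})²} χ_{(u_{μ,J_1}^{(δ)})^* + (u_{ν,J_2}^{(δ)})^*}(x) ≤ C, where the sum of sets is the algebraic sum. -/

import Mathlib

open Set Pointwise

noncomputable def GammaD (δ μ : ℝ) : Set ℂ :=
  {ξ : ℂ | ξ ≠ 0 ∧ μ * Real.sqrt δ ≤ ξ.arg ∧ ξ.arg < (μ + 1) * Real.sqrt δ}

def calND (δ : ℝ) : Set ℤ :=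
  {μ : ℤ | |(μ : ℝ)| ≤ Real.pi / 8 * (Real.sqrt δ)⁻¹ - 1}

noncomputable def uSetD (δ μ : ℝ) (J : Set ℝ) : Set (ℂ × ℝ) :=
  {p : ℂ × ℝ | |p.2 - ‖p.1‖| ≤ δ ∧ p.1 ∈ GammaD δ μ ∧ ‖p.1‖ ∈ J}

noncomputable def GammaStar (δ : ℝ) (μ : ℤ) : Set ℂ :=
  {ξ : ℂ | ξ ≠ 0 ∧ ((μ : ℝ) - 1) * Real.sqrt δ ≤ ξ.arg ∧
      ξ.arg < ((μ : ℝ) + 2) * Real.sqrt δ}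

def calNStar (δ : ℝ) : Set ℤ :=
  {μ : ℤ | |(μ : ℝ)| ≤ Real.pi / 7 * (Real.sqrt δ)⁻¹ - 1}

noncomputable def uStar (δ : ℝ) (μ : ℤ) (α β : ℝ) : Set (ℂ × ℝ) :=
  {p : ℂ × ℝ | |p.2 - ‖p.1‖| ≤ 6 * δ ∧ p.1 ∈ GammaStar δ μ ∧
      ‖p.1‖ ∈ Set.Icc (α - 2 * δ) (β + 2 * δ)}

set_option maxHeartbeats 2000000

section Helpers
open Real


lemma trig_combo (r₁ r₂ p q M : ℝ) :
    Real.cos M * (r₁ * Real.sin (q + p) + r₂ * Real.sin (q - p))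
      - Real.sin M * (r₁ * Real.cos (q + p) + r₂ * Real.cos (q - p))
    = (r₁ - r₂) * Real.sin p * Real.cos (M - q)
      - (r₁ + r₂) * Real.cos p * Real.sin (M - q) := by
  simp only [Real.sin_add, Real.cos_add, Real.sin_sub, Real.cos_sub]
  ring

lemma sin_lb {x : ℝ} (h0 : 0 ≤ x) (h1 : x ≤ 0.95) : 0.636 * x ≤ Real.sin x := by
  have hpi1 : (3.141592 : ℝ) < π := by have := Real.pi_gt_d6; linarith
  have hpi2 : π < 3.141593 := by have := Real.pi_lt_d6; linarith
  have h2 : 2 / π * x ≤ Real.sin x := Real.mul_le_sin h0 (by nlinarith)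
  have h3 : 0.636 * x ≤ 2 / π * x := by
    apply mul_le_mul_of_nonneg_right _ h0
    rw [le_div_iff₀ (by linarith)]; nlinarith
  linarith

lemma sin_lip (a b : ℝ) : |Real.sin a - Real.sin b| ≤ |a - b| := by
  rw [Real.sin_sub_sin, abs_mul, abs_mul]
  have h1 := Real.abs_sin_le_abs (x := (a - b) / 2)
  have h2 := Real.abs_cos_le_one ((a + b) / 2)
  have h3 : |(a - b) / 2| = |a - b| / 2 := by rw [abs_div]; norm_num
  have h4 : (0:ℝ) ≤ |a - b| := abs_nonneg _
  have h5 : (0:ℝ) ≤ |Real.sin ((a - b)/2)| := abs_nonneg _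
  rw [h3] at h1
  rw [show |(2:ℝ)| = 2 by norm_num]
  nlinarith [mul_le_mul h1 h2 (abs_nonneg _) (by linarith : (0:ℝ) ≤ |a-b|/2)]

lemma cos_gap {a b : ℝ} (ha0 : 0 ≤ a) (hb0 : 0 ≤ b) (ha : a ≤ 0.9) (hb : b ≤ 0.9) :
    |a ^ 2 - b ^ 2| ≤ 5 * |Real.cos a - Real.cos b| := by
  rcases le_total a b with h | h
  · have h1 : Real.cos a - Real.cos b = 2 * Real.sin ((a+b)/2) * Real.sin ((b-a)/2) := by
      rw [Real.cos_sub_cos, show (a - b)/2 = -((b-a)/2) by ring, Real.sin_neg]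
      ring
    have h2 : 0.636 * ((a+b)/2) ≤ Real.sin ((a+b)/2) := sin_lb (by linarith) (by linarith)
    have h3 : 0.636 * ((b-a)/2) ≤ Real.sin ((b-a)/2) := sin_lb (by linarith) (by linarith)
    have key : 2 * (0.636 * ((a+b)/2)) * (0.636 * ((b-a)/2)) ≤ Real.cos a - Real.cos b := by
      rw [h1]
      have e1 : (0:ℝ) ≤ 0.636 * ((a+b)/2) := by nlinarith
      have e2 : (0:ℝ) ≤ 0.636 * ((b-a)/2) := by nlinarith
      nlinarith [mul_le_mul h2 h3 e2 (le_trans e1 h2)]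
    have habs : |a^2 - b^2| = b^2 - a^2 := by
      rw [abs_sub_comm, abs_of_nonneg]; nlinarith
    have hle : Real.cos a - Real.cos b ≤ |Real.cos a - Real.cos b| := le_abs_self _
    rw [habs]; nlinarith
  · have h1 : Real.cos b - Real.cos a = 2 * Real.sin ((a+b)/2) * Real.sin ((a-b)/2) := by
      rw [Real.cos_sub_cos, show (b - a)/2 = -((a-b)/2) by ring, Real.sin_neg]
      ring
    have h2 : 0.636 * ((a+b)/2) ≤ Real.sin ((a+b)/2) := sin_lb (by linarith) (by linarith)
    have h3 : 0.636 * ((a-b)/2) ≤ Real.sin ((a-b)/2) := sin_lb (by linarith) (by linarith)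
    have key : 2 * (0.636 * ((a+b)/2)) * (0.636 * ((a-b)/2)) ≤ Real.cos b - Real.cos a := by
      rw [h1]
      have e1 : (0:ℝ) ≤ 0.636 * ((a+b)/2) := by nlinarith
      have e2 : (0:ℝ) ≤ 0.636 * ((a-b)/2) := by nlinarith
      nlinarith [mul_le_mul h2 h3 e2 (le_trans e1 h2)]
    have habs : |a^2 - b^2| = a^2 - b^2 := by
      rw [abs_of_nonneg]; nlinarith
    have hle : Real.cos b - Real.cos a ≤ |Real.cos a - Real.cos b| := by
      rw [abs_sub_comm]; exact le_abs_self _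
    rw [habs]; nlinarith


lemma abs_sub_of_sign {s s' : ℝ} (h : 0 ≤ s * s') : |s - s'| = |(|s| - |s'|)| := by
  rcases le_or_gt 0 s with h1 | h1 <;> rcases le_or_gt 0 s' with h2 | h2
  · rw [abs_of_nonneg h1, abs_of_nonneg h2]
  · have hs0 : s = 0 := by nlinarith
    simp [hs0, abs_abs, abs_sub_comm]
  · have hs0 : s' = 0 := by nlinarith
    simp [hs0, abs_abs]
  · rw [abs_of_neg h1, abs_of_neg h2, show -s - -s' = -(s - s') by ring, abs_neg]

lemma stepA {ε s s' : ℝ} (hε0 : 0 < ε)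
    (hs : |s| ≤ 0.9) (hs' : |s'| ≤ 0.9) (hsign : 0 ≤ s * s')
    (hcos : |Real.cos s - Real.cos s'| ≤ 98 * ε^2 + 2.1 * ε * s'^2) :
    |s - s'| ≤ 50 * ε := by
  rw [abs_sub_of_sign hsign]
  have hσ0 : 0 ≤ |s| := abs_nonneg s
  have hσ'0 : 0 ≤ |s'| := abs_nonneg s'
  have h1 : |(|s|) ^ 2 - (|s'|) ^ 2| ≤ 5 * |Real.cos (|s|) - Real.cos (|s'|)| :=
    cos_gap hσ0 hσ'0 hs hs'
  rw [Real.cos_abs, Real.cos_abs, sq_abs, sq_abs] at h1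
  have h2 : |s ^ 2 - s' ^ 2| ≤ 490 * ε^2 + 10.5 * ε * s'^2 := by
    calc |s ^ 2 - s' ^ 2| ≤ 5 * |Real.cos s - Real.cos s'| := h1
    _ ≤ 490 * ε^2 + 10.5 * ε * s'^2 := by linarith
  have habs : |s ^ 2 - s' ^ 2| = |(|s| - |s'|)| * (|s| + |s'|) := by
    rw [show s ^ 2 - s' ^ 2 = (|s|) ^ 2 - (|s'|) ^ 2 by rw [sq_abs, sq_abs],
      show (|s|) ^ 2 - (|s'|) ^ 2 = (|s| - |s'|) * (|s| + |s'|) by ring, abs_mul,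
      abs_of_nonneg (by linarith : (0:ℝ) ≤ |s| + |s'|)]
  rw [habs] at h2
  have hσ'σ : s' ^ 2 ≤ 0.9 * (|s| + |s'|) := by
    rw [← sq_abs s']; nlinarith
  by_cases hc : |s| + |s'| ≤ 23 * ε
  · have h3 : |(|s| - |s'|)| ≤ |s| + |s'| := abs_le.2 ⟨by linarith, by linarith⟩
    linarith
  · push_neg at hc
    nlinarith [abs_nonneg (|s| - |s'|)]


lemma prod_diff {a b a' b' da db Ma Mb : ℝ} (ha : |a - a'| ≤ da) (hb : |b - b'| ≤ db)
    (hbM : |b| ≤ Mb) (haM : |a'| ≤ Ma) : |a * b - a' * b'| ≤ da * Mb + Ma * db := by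
  have h : a * b - a' * b' = (a - a') * b + a' * (b - b') := by ring
  rw [h]
  calc |(a - a') * b + a' * (b - b')| ≤ |(a - a') * b| + |a' * (b - b')| := abs_add_le _ _
    _ = |a - a'| * |b| + |a'| * |b - b'| := by rw [abs_mul, abs_mul]
    _ ≤ da * Mb + Ma * db := by
        have h3 : (0:ℝ) ≤ da := le_trans (abs_nonneg _) ha
        exact add_le_add (mul_le_mul ha hbM (abs_nonneg _) h3)
          (mul_le_mul haM hb (abs_nonneg _) (le_trans (abs_nonneg _) haM))

lemma mul_lb {a b : ℝ} (ha : 0.999 ≤ a) (hb : 0.999 ≤ b) : (0.998:ℝ) ≤ a * b := by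
  nlinarith

lemma small_quad {ε u : ℝ} (hε0 : 0 < ε) (h0 : 0 ≤ u) (hub : u ≤ 0.9)
    (h : 1.77 * (0.636 * u) ≤ 26.3*ε + 0.23*u^2) : u ≤ 29 * ε := by
  nlinarith [mul_nonneg h0 (sub_nonneg.2 hub)]

lemma key_real {ε r₁ r₂ θ₁ θ₂ r₁' r₂' θ₁' θ₂' : ℝ}
    (hε0 : 0 < ε) (hε1 : ε ≤ 1/1000)
    (hr₁l : 0.999 ≤ r₁) (hr₁u : r₁ ≤ 2.001)
    (hr₂l : 0.999 ≤ r₂) (hr₂u : r₂ ≤ 2.001)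
    (hr₁l' : 0.999 ≤ r₁') (hr₁u' : r₁' ≤ 2.001)
    (hr₂l' : 0.999 ≤ r₂') (hr₂u' : r₂' ≤ 2.001)
    (hd1 : |r₁ - r₁'| ≤ 1.01 * ε) (hd2 : |r₂ - r₂'| ≤ 1.01 * ε)
    (hPP : |(r₁ + r₂) - (r₁' + r₂')| ≤ 24 * ε^2)
    (ht₁ : |θ₁| ≤ 0.45) (ht₂ : |θ₂| ≤ 0.45)
    (ht₁' : |θ₁'| ≤ 0.45) (ht₂' : |θ₂'| ≤ 0.45)
    (hRe : r₁ * Real.cos θ₁ + r₂ * Real.cos θ₂ = r₁' * Real.cos θ₁' + r₂' * Real.cos θ₂')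
    (hIm : r₁ * Real.sin θ₁ + r₂ * Real.sin θ₂ = r₁' * Real.sin θ₁' + r₂' * Real.sin θ₂')
    (hsign : 0 ≤ (θ₁ - θ₂) * (θ₁' - θ₂')) :
    |θ₁ - θ₁'| ≤ 54 * ε ∧ |θ₂ - θ₂'| ≤ 54 * ε := by
  rw [abs_le] at ht₁ ht₂ ht₁' ht₂'
  obtain ⟨ht₁a, ht₁b⟩ := ht₁; obtain ⟨ht₂a, ht₂b⟩ := ht₂
  obtain ⟨ht₁a', ht₁b'⟩ := ht₁'; obtain ⟨ht₂a', ht₂b'⟩ := ht₂'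
  -- Step A
  have E : r₁^2 + r₂^2 + 2*r₁*r₂*Real.cos (θ₁ - θ₂)
      = r₁'^2 + r₂'^2 + 2*r₁'*r₂'*Real.cos (θ₁' - θ₂') := by
    rw [Real.cos_sub, Real.cos_sub]
    linear_combination (r₁ * Real.cos θ₁ + r₂ * Real.cos θ₂ + r₁' * Real.cos θ₁'
        + r₂' * Real.cos θ₂') * hRe
      + (r₁ * Real.sin θ₁ + r₂ * Real.sin θ₂ + r₁' * Real.sin θ₁'
        + r₂' * Real.sin θ₂') * hIm
      - r₁^2 * Real.sin_sq_add_cos_sq θ₁ - r₂^2 * Real.sin_sq_add_cos_sq θ₂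
      + r₁'^2 * Real.sin_sq_add_cos_sq θ₁' + r₂'^2 * Real.sin_sq_add_cos_sq θ₂'
  have hprod : |r₁ * r₂ - r₁' * r₂'| ≤ 4.05 * ε := by
    have h := prod_diff (da := 1.01*ε) (db := 1.01*ε) (Ma := 2.001) (Mb := 2.001)
      hd1 hd2 (abs_le.2 ⟨by linarith, by linarith⟩) (abs_le.2 ⟨by linarith, by linarith⟩)
    calc |r₁ * r₂ - r₁' * r₂'| ≤ 1.01*ε * 2.001 + 2.001 * (1.01*ε) := h
      _ ≤ 4.05 * ε := by linarith
  have hcs'1 : 1 - ((θ₁' - θ₂')^2)/2 ≤ Real.cos (θ₁' - θ₂') :=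
    Real.one_sub_sq_div_two_le_cos
  have hcs'2 : Real.cos (θ₁' - θ₂') ≤ 1 := Real.cos_le_one _
  have hPdiff : |(r₁+r₂)^2 - (r₁'+r₂')^2| ≤ 193 * ε^2 := by
    have h : (r₁+r₂)^2 - (r₁'+r₂')^2 = ((r₁+r₂) - (r₁'+r₂')) * ((r₁+r₂) + (r₁'+r₂')) := by
      ring
    rw [h, abs_mul]
    have h2 : |(r₁+r₂) + (r₁'+r₂')| ≤ 8.004 := abs_le.2 ⟨by linarith, by linarith⟩
    calc |(r₁+r₂) - (r₁'+r₂')| * |(r₁+r₂) + (r₁'+r₂')| ≤ (24*ε^2) * 8.004 :=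
          mul_le_mul hPP h2 (abs_nonneg _) (by positivity)
      _ ≤ 193 * ε^2 := by linarith [sq_nonneg ε]

  have hX : |2*r₁*r₂*(Real.cos (θ₁-θ₂) - Real.cos (θ₁'-θ₂'))|
      ≤ 193*ε^2 + 4.05*ε*(θ₁'-θ₂')^2 := by
    have hid : 2*r₁*r₂*(Real.cos (θ₁-θ₂) - Real.cos (θ₁'-θ₂'))
        = ((r₁'+r₂')^2 - (r₁+r₂)^2)
          - (2*(r₁'*r₂' - r₁*r₂)) * (1 - Real.cos (θ₁'-θ₂')) := by
      linear_combination E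
    rw [hid]
    have h1 : |(2*(r₁'*r₂' - r₁*r₂)) * (1 - Real.cos (θ₁'-θ₂'))|
        ≤ (8.1*ε) * ((θ₁'-θ₂')^2/2) := by
      rw [abs_mul]
      have e1 : |2*(r₁'*r₂' - r₁*r₂)| ≤ 8.1*ε := by
        rw [abs_mul, abs_sub_comm]
        rw [show |(2:ℝ)| = 2 by norm_num]
        linarith
      have e2 : |1 - Real.cos (θ₁'-θ₂')| ≤ (θ₁'-θ₂')^2/2 := by
        rw [abs_of_nonneg (by linarith)]; linarith
      exact mul_le_mul e1 e2 (abs_nonneg _) (by positivity)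
    have h2 : |((r₁'+r₂')^2 - (r₁+r₂)^2) - (2*(r₁'*r₂' - r₁*r₂)) * (1 - Real.cos (θ₁'-θ₂'))|
        ≤ |(r₁'+r₂')^2 - (r₁+r₂)^2| + |(2*(r₁'*r₂' - r₁*r₂)) * (1 - Real.cos (θ₁'-θ₂'))| :=
      abs_sub _ _
    rw [abs_sub_comm] at hPdiff
    linarith [sq_nonneg ε]
  have hcosgap : |Real.cos (θ₁-θ₂) - Real.cos (θ₁'-θ₂')| ≤ 98*ε^2 + 2.1*ε*(θ₁'-θ₂')^2 := by
    have hmul : (0.998:ℝ) ≤ r₁ * r₂ := mul_lb hr₁l hr₂l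
    rw [abs_mul, show |2*r₁*r₂| = 2*r₁*r₂ from abs_of_nonneg (by linarith)] at hX
    have h2 : (1.996:ℝ) ≤ 2*r₁*r₂ := by linarith
    have h3 := abs_nonneg (Real.cos (θ₁-θ₂) - Real.cos (θ₁'-θ₂'))
    have h4 : 1.996 * |Real.cos (θ₁-θ₂) - Real.cos (θ₁'-θ₂')|
        ≤ 2*r₁*r₂ * |Real.cos (θ₁-θ₂) - Real.cos (θ₁'-θ₂')| :=
      mul_le_mul_of_nonneg_right h2 h3
    have h5 : 0 ≤ ε * (θ₁'-θ₂')^2 := mul_nonneg (le_of_lt hε0) (sq_nonneg _)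
    have h6 : (0:ℝ) ≤ ε^2 := sq_nonneg ε
    linarith
  have hs50 : |(θ₁-θ₂) - (θ₁'-θ₂')| ≤ 50 * ε := by
    refine stepA hε0 (abs_le.2 ⟨by linarith, by linarith⟩)
      (abs_le.2 ⟨by linarith, by linarith⟩) hsign hcosgap
  -- Step B
  obtain ⟨M, hM⟩ : ∃ M, M = (θ₁' + θ₂')/2 := ⟨_, rfl⟩
  have t1 := trig_combo r₁ r₂ ((θ₁-θ₂)/2) ((θ₁+θ₂)/2) M
  rw [show (θ₁+θ₂)/2 + (θ₁-θ₂)/2 = θ₁ by ring, show (θ₁+θ₂)/2 - (θ₁-θ₂)/2 = θ₂ by ring]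
    at t1
  have t2 := trig_combo r₁' r₂' ((θ₁'-θ₂')/2) ((θ₁'+θ₂')/2) M
  rw [show (θ₁'+θ₂')/2 + (θ₁'-θ₂')/2 = θ₁' by ring,
    show (θ₁'+θ₂')/2 - (θ₁'-θ₂')/2 = θ₂' by ring, ← hM, sub_self,
    Real.sin_zero, Real.cos_zero] at t2
  rw [hRe, hIm, t2] at t1
  -- t1 : primed-simple = (r₁-r₂) sin(s/2) cos(M-q) - (r₁+r₂) cos(s/2) sin(M-q)
  obtain ⟨u, hu⟩ : ∃ u, u = M - (θ₁+θ₂)/2 := ⟨_, rfl⟩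
  rw [← hu] at t1
  have E2 : (r₁ + r₂) * Real.cos ((θ₁-θ₂)/2) * Real.sin u
      = (r₁ - r₂) * Real.sin ((θ₁-θ₂)/2) * Real.cos u
        - (r₁' - r₂') * Real.sin ((θ₁'-θ₂')/2) := by
    linear_combination t1
  have hDD' : |(r₁ - r₂) * Real.sin ((θ₁-θ₂)/2) - (r₁' - r₂') * Real.sin ((θ₁'-θ₂')/2)|
      ≤ 26.3 * ε := by
    have hdd : |(r₁ - r₂) - (r₁' - r₂')| ≤ 2.02 * ε := by
      rw [abs_le] at hd1 hd2 ⊢; constructor <;> linarith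
    have hss : |Real.sin ((θ₁-θ₂)/2) - Real.sin ((θ₁'-θ₂')/2)| ≤ 25 * ε := by
      have h := sin_lip ((θ₁-θ₂)/2) ((θ₁'-θ₂')/2)
      have h2 : |(θ₁-θ₂)/2 - (θ₁'-θ₂')/2| = |(θ₁-θ₂) - (θ₁'-θ₂')|/2 := by
        rw [show (θ₁-θ₂)/2 - (θ₁'-θ₂')/2 = ((θ₁-θ₂) - (θ₁'-θ₂'))/2 by ring, abs_div]
        norm_num
      rw [h2] at h; linarith
    have hsb : |Real.sin ((θ₁-θ₂)/2)| ≤ 0.45 := by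
      have := Real.abs_sin_le_abs (x := (θ₁-θ₂)/2)
      have h2 : |(θ₁-θ₂)/2| ≤ 0.45 := abs_le.2 ⟨by linarith, by linarith⟩
      linarith
    have hrb : |r₁' - r₂'| ≤ 1.01 := abs_le.2 ⟨by linarith, by linarith⟩
    have h := prod_diff (da := 2.02*ε) (db := 25*ε) (Ma := 1.01) (Mb := 0.45)
      hdd hss hsb hrb
    calc _ ≤ 2.02*ε*0.45 + 1.01*(25*ε) := h
      _ ≤ 26.3 * ε := by linarith
  have hDb : |(r₁ - r₂) * Real.sin ((θ₁-θ₂)/2)| ≤ 0.46 := by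
    rw [abs_mul]
    have h1 : |r₁ - r₂| ≤ 1.01 := abs_le.2 ⟨by linarith, by linarith⟩
    have h2 : |Real.sin ((θ₁-θ₂)/2)| ≤ 0.45 := by
      have := Real.abs_sin_le_abs (x := (θ₁-θ₂)/2)
      have h2 : |(θ₁-θ₂)/2| ≤ 0.45 := abs_le.2 ⟨by linarith, by linarith⟩
      linarith
    calc |r₁ - r₂| * |Real.sin ((θ₁-θ₂)/2)| ≤ 1.01 * 0.45 :=
          mul_le_mul h1 h2 (abs_nonneg _) (by norm_num)
      _ ≤ 0.46 := by norm_num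
  have hcoss2 : (0.89:ℝ) ≤ Real.cos ((θ₁-θ₂)/2) := by
    have h1 : 1 - ((θ₁-θ₂)/2)^2/2 ≤ Real.cos ((θ₁-θ₂)/2) := Real.one_sub_sq_div_two_le_cos
    have hb : (θ₁-θ₂)^2 ≤ 0.81 := by
      linarith [mul_nonneg (by linarith : (0:ℝ) ≤ 0.9 - (θ₁-θ₂))
        (by linarith : (0:ℝ) ≤ 0.9 + (θ₁-θ₂))]
    have he : ((θ₁-θ₂)/2)^2 = (θ₁-θ₂)^2/4 := by ring
    linarith
  have hsum : (1.77:ℝ) ≤ (r₁ + r₂) * Real.cos ((θ₁-θ₂)/2) := by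
    have h := mul_le_mul (show (1.998:ℝ) ≤ r₁ + r₂ by linarith) hcoss2
      (by norm_num) (by linarith)
    linarith
  have huB : |u| ≤ 0.9 := by
    rw [hu, hM, abs_le]
    constructor <;> linarith
  have hcu1 : 1 - u^2/2 ≤ Real.cos u := Real.one_sub_sq_div_two_le_cos
  have hcu2 : Real.cos u ≤ 1 := Real.cos_le_one _
  -- |LHS of E2| ≤ 26.3 ε + 0.23 u²
  have hE2bound : |(r₁ + r₂) * Real.cos ((θ₁-θ₂)/2) * Real.sin u| ≤ 26.3*ε + 0.23*u^2 := by
    rw [E2]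
    have hid : (r₁ - r₂) * Real.sin ((θ₁-θ₂)/2) * Real.cos u
        - (r₁' - r₂') * Real.sin ((θ₁'-θ₂')/2)
        = ((r₁ - r₂) * Real.sin ((θ₁-θ₂)/2) - (r₁' - r₂') * Real.sin ((θ₁'-θ₂')/2))
          - ((r₁ - r₂) * Real.sin ((θ₁-θ₂)/2)) * (1 - Real.cos u) := by ring
    rw [hid]
    have h1 : |((r₁ - r₂) * Real.sin ((θ₁-θ₂)/2)) * (1 - Real.cos u)| ≤ 0.46 * (u^2/2) := by
      rw [abs_mul]
      have e2 : |1 - Real.cos u| ≤ u^2/2 := by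
        rw [abs_of_nonneg (by linarith)]; linarith
      exact mul_le_mul hDb e2 (abs_nonneg _) (by norm_num)
    have h2 := abs_sub ((r₁ - r₂) * Real.sin ((θ₁-θ₂)/2) - (r₁' - r₂') * Real.sin ((θ₁'-θ₂')/2))
      (((r₁ - r₂) * Real.sin ((θ₁-θ₂)/2)) * (1 - Real.cos u))
    linarith
  have hu29 : |u| ≤ 29 * ε := by
    rw [abs_le] at hE2bound
    rcases le_total 0 u with h0 | h0
    · have hsl : 0.636 * u ≤ Real.sin u := sin_lb h0 (by linarith [abs_le.1 huB])
      have hsn : 0 ≤ Real.sin u := by linarith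
      have hc : 1.77 * Real.sin u ≤ (r₁ + r₂) * Real.cos ((θ₁-θ₂)/2) * Real.sin u :=
        mul_le_mul_of_nonneg_right hsum hsn
      have hub : u ≤ 0.9 := (abs_le.1 huB).2
      rw [abs_le]
      constructor
      · linarith
      · exact small_quad hε0 h0 hub (by linarith)
    · have hsl : 0.636 * (-u) ≤ Real.sin (-u) := sin_lb (by linarith) (by
        have := (abs_le.1 huB).1; linarith)
      rw [Real.sin_neg] at hsl
      have hsn : Real.sin u ≤ 0 := by linarith
      have hc : (r₁ + r₂) * Real.cos ((θ₁-θ₂)/2) * Real.sin u ≤ 1.77 * Real.sin u :=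
        mul_le_mul_of_nonpos_right hsum hsn
      have hub : -u ≤ 0.9 := by have := (abs_le.1 huB).1; linarith
      rw [abs_le]
      constructor
      · have := small_quad hε0 (neg_nonneg.2 h0) hub
          (by linarith)
        linarith
      · linarith
  -- conclusion
  have hid1 : θ₁ - θ₁' = -u + ((θ₁-θ₂) - (θ₁'-θ₂'))/2 := by rw [hu, hM]; ring
  have hid2 : θ₂ - θ₂' = -u - ((θ₁-θ₂) - (θ₁'-θ₂'))/2 := by rw [hu, hM]; ring
  rw [abs_le] at hu29 hs50
  constructor
  · rw [hid1, abs_le]; constructor <;> [linarith; linarith]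
  · rw [hid2, abs_le]; constructor <;> [linarith; linarith]

end Helpers


lemma unpack {δ ε α β : ℝ} {μ : ℤ} {a : ℂ × ℝ} (hδ0 : 0 < δ) (hεd : ε = Real.sqrt δ)
    (hε1 : ε ≤ 1/1000) (hμ : μ ∈ calNStar δ) (ha : a ∈ uStar δ μ α β) :
    a.1.re = ‖a.1‖ * Real.cos a.1.arg ∧
    a.1.im = ‖a.1‖ * Real.sin a.1.arg ∧
    α - 2*ε^2 ≤ ‖a.1‖ ∧ ‖a.1‖ ≤ β + 2*ε^2 ∧
    |a.2 - ‖a.1‖| ≤ 6*ε^2 ∧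
    |a.1.arg - μ*ε| ≤ 2*ε ∧ |a.1.arg| ≤ 0.45 := by
  obtain ⟨h6, ⟨hne, ha1, ha2⟩, hIl, hIu⟩ := ha
  have hδε : δ = ε^2 := by rw [hεd]; exact (Real.sq_sqrt hδ0.le).symm
  have hε0 : 0 < ε := by rw [hεd]; exact Real.sqrt_pos.2 hδ0
  rw [← hεd] at ha1 ha2
  have hμ' : |(μ:ℝ)| ≤ Real.pi / 7 * ε⁻¹ - 1 := by
    have := hμ; rw [calNStar, Set.mem_setOf_eq, ← hεd] at this; exact this
  have hμε : |(μ:ℝ)| * ε ≤ Real.pi / 7 - ε := by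
    have h := mul_le_mul_of_nonneg_right hμ' hε0.le
    have he : (Real.pi / 7 * ε⁻¹ - 1) * ε = Real.pi / 7 - ε := by
      field_simp
    rw [he] at h; exact h
  have habs0 : ‖a.1‖ ≠ 0 := by
    simpa using hne
  have hre : a.1.re = ‖a.1‖ * Real.cos a.1.arg := by
    rw [Complex.cos_arg hne]; field_simp
  have him : a.1.im = ‖a.1‖ * Real.sin a.1.arg := by
    rw [Complex.sin_arg]; field_simp
  have hpi : Real.pi < 3.141593 := by
    have := Real.pi_lt_d6; linarith
  have hargμ : |a.1.arg - μ*ε| ≤ 2*ε := abs_le.2 ⟨by linarith, by linarith⟩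
  have harg : |a.1.arg| ≤ 0.45 := by
    have h1 : |(μ:ℝ)*ε| = |(μ:ℝ)| * ε := by rw [abs_mul, abs_of_nonneg hε0.le]
    have h2 : |a.1.arg| ≤ |a.1.arg - μ*ε| + |(μ:ℝ)*ε| := by
      calc |a.1.arg| = |(a.1.arg - μ*ε) + (μ:ℝ)*ε| := by ring_nf
        _ ≤ |a.1.arg - μ*ε| + |(μ:ℝ)*ε| := abs_add_le _ _
    rw [h1] at h2
    have hπ7 : Real.pi / 7 ≤ 0.44880 := by linarith
    linarith
  exact ⟨hre, him, by linarith [hIl], by linarith [hIu], by rw [← hδε]; exact h6, hargμ, harg⟩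

lemma eps_small {δ ε : ℝ} (hδ1 : δ < 1/1000000) (hδε : δ = ε^2) (hε0 : 0 < ε) :
    ε ≤ 1/1000 := by nlinarith

lemma int_abs_le {μ μ' : ℤ} (h : |(μ:ℝ) - μ'| ≤ 58) : |μ - μ'| ≤ 60 := by
  have h1 : ((|μ - μ'| : ℤ) : ℝ) ≤ 58 := by
    rw [Int.cast_abs]; push_cast; push_cast at h; exact h
  have h2 : (|μ - μ'| : ℤ) ≤ (58:ℤ) := by exact_mod_cast h1
  linarith

lemma pair_close {δ α₁ β₁ α₂ β₂ : ℝ} {x : ℂ × ℝ} {μ ν μ' ν' : ℤ}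
    (hδ0 : 0 < δ) (hδ1 : δ < 1/1000000)
    (hα₁ : 1 ≤ α₁) (hβ₁ : β₁ ≤ 2) (hJ₁ : β₁ - α₁ ≤ Real.sqrt δ)
    (hα₂ : 1 ≤ α₂) (hβ₂ : β₂ ≤ 2) (hJ₂ : β₂ - α₂ ≤ Real.sqrt δ)
    (hμ : μ ∈ calNStar δ) (hν : ν ∈ calNStar δ)
    (hμ' : μ' ∈ calNStar δ) (hν' : ν' ∈ calNStar δ)
    {a b a' b' : ℂ × ℝ}
    (ha : a ∈ uStar δ μ α₁ β₁) (hb : b ∈ uStar δ ν α₂ β₂)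
    (ha' : a' ∈ uStar δ μ' α₁ β₁) (hb' : b' ∈ uStar δ ν' α₂ β₂)
    (hab : a + b = x) (hab' : a' + b' = x)
    (hsign : 0 ≤ (a.1.arg - b.1.arg) * (a'.1.arg - b'.1.arg)) :
    |μ - μ'| ≤ 60 ∧ |ν - ν'| ≤ 60 := by
  set ε := Real.sqrt δ with hεd
  have hε0 : 0 < ε := Real.sqrt_pos.2 hδ0
  have hδε : δ = ε^2 := (Real.sq_sqrt hδ0.le).symm
  have hε1 : ε ≤ 1/1000 := eps_small hδ1 hδε hε0
  obtain ⟨re1, im1, rl1, ru1, ht1, hg1, hb1⟩ := unpack hδ0 hεd hε1 hμ ha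
  obtain ⟨re2, im2, rl2, ru2, ht2, hg2, hb2⟩ := unpack hδ0 hεd hε1 hν hb
  obtain ⟨re1', im1', rl1', ru1', ht1', hg1', hb1'⟩ := unpack hδ0 hεd hε1 hμ' ha'
  obtain ⟨re2', im2', rl2', ru2', ht2', hg2', hb2'⟩ := unpack hδ0 hεd hε1 hν' hb'
  have hε2 : ε^2 ≤ 1/1000000 := by rw [← hδε]; linarith
  have hεε : ε^2 ≤ 0.001 * ε := by
    rw [pow_two]; linarith [mul_le_mul_of_nonneg_right hε1 hε0.le]
  -- complex / real components of the sums agree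
  have hx1 : a.1 + b.1 = a'.1 + b'.1 := by
    have e1 : (a + b).1 = x.1 := by rw [hab]
    have e2 : (a' + b').1 = x.1 := by rw [hab']
    simpa using e1.trans e2.symm
  have hx2 : a.2 + b.2 = a'.2 + b'.2 := by
    have e1 : (a + b).2 = x.2 := by rw [hab]
    have e2 : (a' + b').2 = x.2 := by rw [hab']
    simpa using e1.trans e2.symm
  have hRe : ‖a.1‖ * Real.cos a.1.arg + ‖b.1‖ * Real.cos b.1.arg
      = ‖a'.1‖ * Real.cos a'.1.arg + ‖b'.1‖ * Real.cos b'.1.arg := by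
    rw [← re1, ← re2, ← re1', ← re2']
    have := congrArg Complex.re hx1
    simpa using this
  have hIm : ‖a.1‖ * Real.sin a.1.arg + ‖b.1‖ * Real.sin b.1.arg
      = ‖a'.1‖ * Real.sin a'.1.arg + ‖b'.1‖ * Real.sin b'.1.arg := by
    rw [← im1, ← im2, ← im1', ← im2']
    have := congrArg Complex.im hx1
    simpa using this
  have hPP : |(‖a.1‖ + ‖b.1‖) - (‖a'.1‖ + ‖b'.1‖)|
      ≤ 24 * ε^2 := by
    rw [abs_le] at ht1 ht2 ht1' ht2' ⊢
    constructor <;> [linarith; linarith]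
  have hd1 : |‖a.1‖ - ‖a'.1‖| ≤ 1.01 * ε := by
    rw [abs_le]; constructor <;> [linarith; linarith]
  have hd2 : |‖b.1‖ - ‖b'.1‖| ≤ 1.01 * ε := by
    rw [abs_le]; constructor <;> [linarith; linarith]
  have := key_real hε0 hε1
    (by linarith) (by linarith) (by linarith) (by linarith)
    (by linarith) (by linarith) (by linarith) (by linarith)
    hd1 hd2 hPP hb1 hb2 hb1' hb2' hRe hIm hsign
  obtain ⟨k1, k2⟩ := this
  constructor
  · have h1 : |((μ:ℝ) - μ') * ε| ≤ 58 * ε := by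
      have hid : ((μ:ℝ) - μ') * ε
          = -(a.1.arg - μ*ε) + (a.1.arg - a'.1.arg) + (a'.1.arg - μ'*ε) := by ring
      rw [hid]
      calc |(-(a.1.arg - μ*ε) + (a.1.arg - a'.1.arg)) + (a'.1.arg - μ'*ε)|
          ≤ |(-(a.1.arg - μ*ε) + (a.1.arg - a'.1.arg))| + |a'.1.arg - μ'*ε| := abs_add_le _ _
        _ ≤ |(-(a.1.arg - μ*ε))| + |a.1.arg - a'.1.arg| + |a'.1.arg - μ'*ε| := by
            linarith [abs_add_le (-(a.1.arg - μ*ε)) (a.1.arg - a'.1.arg)]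
        _ ≤ 58 * ε := by rw [abs_neg]; linarith
    rw [abs_mul, abs_of_nonneg hε0.le] at h1
    have h2 : |(μ:ℝ) - μ'| ≤ 58 := le_of_mul_le_mul_right (by linarith) hε0
    exact int_abs_le h2
  · have h1 : |((ν:ℝ) - ν') * ε| ≤ 58 * ε := by
      have hid : ((ν:ℝ) - ν') * ε
          = -(b.1.arg - ν*ε) + (b.1.arg - b'.1.arg) + (b'.1.arg - ν'*ε) := by ring
      rw [hid]
      calc |(-(b.1.arg - ν*ε) + (b.1.arg - b'.1.arg)) + (b'.1.arg - ν'*ε)|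
          ≤ |(-(b.1.arg - ν*ε) + (b.1.arg - b'.1.arg))| + |b'.1.arg - ν'*ε| := abs_add_le _ _
        _ ≤ |(-(b.1.arg - ν*ε))| + |b.1.arg - b'.1.arg| + |b'.1.arg - ν'*ε| := by
            linarith [abs_add_le (-(b.1.arg - ν*ε)) (b.1.arg - b'.1.arg)]
        _ ≤ 58 * ε := by rw [abs_neg]; linarith
    rw [abs_mul, abs_of_nonneg hε0.le] at h1
    have h2 : |(ν:ℝ) - ν'| ≤ 58 := le_of_mul_le_mul_right (by linarith) hε0
    exact int_abs_le h2


lemma mul_nonneg_of_nonpos_nonpos' {a b : ℝ} (ha : a ≤ 0) (hb : b ≤ 0) : 0 ≤ a * b := by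
  nlinarith

lemma box_lemma (T : Set (ℤ × ℤ))
    (h : ∀ p ∈ T, ∀ q ∈ T, |p.1 - q.1| ≤ 60 ∧ |p.2 - q.2| ≤ 60) :
    ∃ F : Finset (ℤ × ℤ), T ⊆ ↑F ∧ F.card ≤ 14641 := by
  rcases T.eq_empty_or_nonempty with rfl | ⟨p₀, hp₀⟩
  · exact ⟨∅, by simp, by simp⟩
  · refine ⟨Finset.Icc (p₀.1 - 60) (p₀.1 + 60) ×ˢ Finset.Icc (p₀.2 - 60) (p₀.2 + 60), ?_, ?_⟩
    · intro q hq
      obtain ⟨h1, h2⟩ := h q hq p₀ hp₀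
      rw [abs_le] at h1 h2
      simp only [Finset.coe_product, Set.mem_prod, Finset.coe_Icc, Set.mem_Icc]
      omega
    · rw [Finset.card_product, Int.card_Icc, Int.card_Icc]
      have e1 : p₀.1 + 60 + 1 - (p₀.1 - 60) = 121 := by ring
      have e2 : p₀.2 + 60 + 1 - (p₀.2 - 60) = 121 := by ring
      rw [e1, e2]; decide

theorem statement16 :
    ∃ C : ℕ, 0 < C ∧
      ∀ δ : ℝ, 0 < δ → δ < 1 / 1000000 →
      ∀ α₁ β₁ α₂ β₂ : ℝ,
        1 ≤ α₁ → α₁ ≤ β₁ → β₁ ≤ 2 → β₁ - α₁ ≤ Real.sqrt δ →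
        1 ≤ α₂ → α₂ ≤ β₂ → β₂ ≤ 2 → β₂ - α₂ ≤ Real.sqrt δ →
        ∀ x : ℂ × ℝ,
          {p : ℤ × ℤ | p.1 ∈ calNStar δ ∧ p.2 ∈ calNStar δ ∧
              x ∈ uStar δ p.1 α₁ β₁ + uStar δ p.2 α₂ β₂}.Finite ∧
          {p : ℤ × ℤ | p.1 ∈ calNStar δ ∧ p.2 ∈ calNStar δ ∧
              x ∈ uStar δ p.1 α₁ β₁ + uStar δ p.2 α₂ β₂}.ncard ≤ C := by
  refine ⟨30000, by norm_num, ?_⟩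
  intro δ hδ0 hδ1 α₁ β₁ α₂ β₂ hα₁ hαβ₁ hβ₁ hJ₁ hα₂ hαβ₂ hβ₂ hJ₂ x
  set S : Set (ℤ × ℤ) := {p : ℤ × ℤ | p.1 ∈ calNStar δ ∧ p.2 ∈ calNStar δ ∧
      x ∈ uStar δ p.1 α₁ β₁ + uStar δ p.2 α₂ β₂} with hS
  set Sp : Set (ℤ × ℤ) := {p : ℤ × ℤ | p.1 ∈ calNStar δ ∧ p.2 ∈ calNStar δ ∧
      ∃ a b : ℂ × ℝ, a ∈ uStar δ p.1 α₁ β₁ ∧ b ∈ uStar δ p.2 α₂ β₂ ∧ a + b = x ∧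
        b.1.arg ≤ a.1.arg} with hSp
  set Sm : Set (ℤ × ℤ) := {p : ℤ × ℤ | p.1 ∈ calNStar δ ∧ p.2 ∈ calNStar δ ∧
      ∃ a b : ℂ × ℝ, a ∈ uStar δ p.1 α₁ β₁ ∧ b ∈ uStar δ p.2 α₂ β₂ ∧ a + b = x ∧
        a.1.arg ≤ b.1.arg} with hSm
  have hsplit : S ⊆ Sp ∪ Sm := by
    rintro ⟨μ, ν⟩ ⟨hμ, hν, hmem⟩
    rw [Set.mem_add] at hmem
    obtain ⟨a, ha, b, hb, hab⟩ := hmem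
    rcases le_total (b.1.arg) (a.1.arg) with h | h
    · exact Or.inl ⟨hμ, hν, a, b, ha, hb, hab, h⟩
    · exact Or.inr ⟨hμ, hν, a, b, ha, hb, hab, h⟩
  have hkeyp : ∀ p ∈ Sp, ∀ q ∈ Sp, |p.1 - q.1| ≤ 60 ∧ |p.2 - q.2| ≤ 60 := by
    rintro ⟨μ, ν⟩ ⟨hμ, hν, a, b, ha, hb, hab, hsgn⟩
      ⟨μ', ν'⟩ ⟨hμ', hν', a', b', ha', hb', hab', hsgn'⟩
    exact pair_close hδ0 hδ1 hα₁ hβ₁ hJ₁ hα₂ hβ₂ hJ₂ hμ hν hμ' hν' ha hb ha' hb' hab hab'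
      (mul_nonneg (sub_nonneg.2 hsgn) (sub_nonneg.2 hsgn'))
  have hkeym : ∀ p ∈ Sm, ∀ q ∈ Sm, |p.1 - q.1| ≤ 60 ∧ |p.2 - q.2| ≤ 60 := by
    rintro ⟨μ, ν⟩ ⟨hμ, hν, a, b, ha, hb, hab, hsgn⟩
      ⟨μ', ν'⟩ ⟨hμ', hν', a', b', ha', hb', hab', hsgn'⟩
    exact pair_close hδ0 hδ1 hα₁ hβ₁ hJ₁ hα₂ hβ₂ hJ₂ hμ hν hμ' hν' ha hb ha' hb' hab hab'
      (mul_nonneg_of_nonpos_nonpos' (sub_nonpos.2 hsgn) (sub_nonpos.2 hsgn'))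
  obtain ⟨F₁, hF₁, hc₁⟩ := box_lemma Sp hkeyp
  obtain ⟨F₂, hF₂, hc₂⟩ := box_lemma Sm hkeym
  have hsub : S ⊆ ↑(F₁ ∪ F₂) := by
    intro p hp
    rcases hsplit hp with h | h
    · simp only [Finset.coe_union, Set.mem_union]; exact Or.inl (hF₁ h)
    · simp only [Finset.coe_union, Set.mem_union]; exact Or.inr (hF₂ h)
  have hfin : S.Finite := Set.Finite.subset (F₁ ∪ F₂).finite_toSet hsub
  refine ⟨hfin, ?_⟩
  calc S.ncard ≤ (↑(F₁ ∪ F₂) : Set (ℤ × ℤ)).ncard :=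
        Set.ncard_le_ncard hsub (F₁ ∪ F₂).finite_toSet
    _ = (F₁ ∪ F₂).card := Set.ncard_coe_finset _
    _ ≤ F₁.card + F₂.card := Finset.card_union_le _ _
    _ ≤ 30000 := by omega
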